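/- arXiv:1910.01807 — 6 statements merged into one kernel-verified Lean document; each statement's English description precedes it below -/
import Mathlib

section
/- Let ℓ ≥ 3, let G be a finite connected graph with at least two vertices and diameter at least ℓ, and let H be a finite graph. Then the lexicographic product G[H] is ℓ-distance-balanced if and only if G is ℓ-distance-balanced. -/
open SimpleGraph

/-- The set of vertices of `G` strictly closer to `u` than to `v`. -/
def closerSet {V : Type*} (G : SimpleGraph V) (u v : V) : Set V :=
  {x | G.dist x u < G.dist x v}

/-- `G` is `ℓ`-distance-balanced: for every pair of vertices at distance `ℓ`, the number of
vertices strictly closer to the first equals the number strictly closer to the second. -/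
def IsDistBalanced {V : Type*} (G : SimpleGraph V) (ℓ : ℕ) : Prop :=
  ∀ u v : V, G.dist u v = ℓ → (closerSet G u v).ncard = (closerSet G v u).ncard

/-- The lexicographic product `G[H]`. -/
def lexProd {α β : Type*} (G : SimpleGraph α) (H : SimpleGraph β) :
    SimpleGraph (α × β) where
  Adj x y := G.Adj x.1 y.1 ∨ (x.1 = y.1 ∧ H.Adj x.2 y.2)
  symm := ⟨by
    rintro x y (h | ⟨e, h⟩)
    · exact Or.inl h.symm
    · exact Or.inr ⟨e.symm, h.symm⟩⟩
  loopless := ⟨by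
    rintro x (h | ⟨_, h⟩)
    · exact G.irrefl h
    · exact H.irrefl h⟩

section Aux

variable {α β : Type*} (G : SimpleGraph α) (H : SimpleGraph β)

/-- Embedding `a ↦ (a, h)` as a graph hom into the lexicographic product. -/
def lexHom (h : β) : G →g lexProd G H :=
  ⟨fun a => (a, h), fun adj => Or.inl adj⟩

lemma exists_adj [Fintype α] (hG : G.Connected) (h2 : 2 ≤ Fintype.card α) (a : α) :
    ∃ b, G.Adj a b := by
  obtain ⟨b, hb⟩ := Fintype.exists_ne_of_one_lt_card h2 a
  obtain ⟨p⟩ := hG.preconnected a b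
  cases p with
  | nil => exact absurd rfl hb.symm
  | cons h q => exact ⟨_, h⟩

lemma dist_fst_le_walk_length (hG : G.Connected) {x y : α × β}
    (p : (lexProd G H).Walk x y) : G.dist x.1 y.1 ≤ p.length := by
  induction p with
  | nil => simp
  | cons h p ih =>
    rename_i u v w
    rw [SimpleGraph.Walk.length_cons]
    rcases h with h | ⟨e, _⟩
    · have ht : G.dist u.1 w.1 ≤ G.dist u.1 v.1 + G.dist v.1 w.1 := hG.dist_triangle
      have h1 : G.dist u.1 v.1 ≤ 1 := dist_le (SimpleGraph.Walk.cons h SimpleGraph.Walk.nil)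
      omega
    · have he : G.dist u.1 w.1 = G.dist v.1 w.1 := by rw [e]
      omega

lemma lex_dist_le {x y : α} (h : x ≠ y) (hr : G.Reachable x y) (b b' : β) :
    (lexProd G H).dist (x, b) (y, b') ≤ G.dist x y := by
  obtain ⟨p, hp⟩ := hr.exists_walk_length_eq_dist
  cases p with
  | nil => exact absurd rfl h
  | cons hadj q =>
    have hw := dist_le (SimpleGraph.Walk.cons (Or.inl hadj) (q.map (lexHom G H b')) :
      (lexProd G H).Walk (x, b) (y, b'))
    have hw2 : (lexProd G H).dist (x, b) (y, b') ≤ q.length + 1 := by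
      rw [← SimpleGraph.Walk.length_map (lexHom G H b') q]; exact hw
    simp only [SimpleGraph.Walk.length_cons] at hp
    omega

lemma lex_reachable_of {x y : α} (hxy : x ≠ y) (h : G.Reachable x y) (b b' : β) :
    (lexProd G H).Reachable (x, b) (y, b') := by
  obtain ⟨p⟩ := h
  cases p with
  | nil => exact absurd rfl hxy
  | cons hadj q =>
    exact ⟨SimpleGraph.Walk.cons (Or.inl hadj) (q.map (lexHom G H b'))⟩

/-- Distance in the lexicographic product when first coordinates differ. -/
lemma lex_dist_eq (hG : G.Connected) {x y : α} (h : x ≠ y) (b b' : β) :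
    (lexProd G H).dist (x, b) (y, b') = G.dist x y := by
  refine le_antisymm (lex_dist_le G H h (hG.preconnected x y) b b') ?_
  obtain ⟨p, hp⟩ :=
    (lex_reachable_of G H h (hG.preconnected x y) b b').exists_walk_length_eq_dist
  have := dist_fst_le_walk_length G H hG p
  simpa [hp] using this

/-- Distance in the lexicographic product when first coordinates agree. -/
lemma lex_dist_le_two [Fintype α] (hG : G.Connected) (h2 : 2 ≤ Fintype.card α)
    (x : α) (b b' : β) : (lexProd G H).dist (x, b) (x, b') ≤ 2 := by
  obtain ⟨c, hc⟩ := exists_adj G hG h2 x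
  have hw := dist_le (SimpleGraph.Walk.cons (v := (c, b)) (Or.inl hc)
      (SimpleGraph.Walk.cons (Or.inl hc.symm) SimpleGraph.Walk.nil) :
    (lexProd G H).Walk (x, b) (x, b'))
  exact hw

lemma closer_lex_eq [Fintype α] (hG : G.Connected) (h2 : 2 ≤ Fintype.card α)
    {ℓ : ℕ} (hℓ : 3 ≤ ℓ) {u v : α × β} (huv : G.dist u.1 v.1 = ℓ) :
    closerSet (lexProd G H) u v = (closerSet G u.1 v.1) ×ˢ Set.univ := by
  have hne : u.1 ≠ v.1 := by
    intro h; rw [h, SimpleGraph.dist_self] at huv; omega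
  ext ⟨a, b⟩
  simp only [closerSet, Set.mem_setOf_eq, Set.mem_prod, Set.mem_univ, and_true]
  obtain ⟨ua, ub⟩ := u
  obtain ⟨va, vb⟩ := v
  simp only at hne huv ⊢
  by_cases hau : a = ua
  · subst hau
    have h1 : (lexProd G H).dist (a, b) (a, ub) ≤ 2 := lex_dist_le_two G H hG h2 a b ub
    have h2' : (lexProd G H).dist (a, b) (va, vb) = ℓ := by
      rw [lex_dist_eq G H hG hne b vb]; exact huv
    constructor
    · intro _
      rw [SimpleGraph.dist_self, huv]; omega
    · intro _; omega
  · by_cases hav : a = va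
    · subst hav
      have h1 : (lexProd G H).dist (a, b) (a, vb) ≤ 2 := lex_dist_le_two G H hG h2 a b vb
      have h2' : (lexProd G H).dist (a, b) (ua, ub) = ℓ := by
        rw [lex_dist_eq G H hG (fun h => hne h.symm) b ub, SimpleGraph.dist_comm]
        exact huv
      have h3 : G.dist a ua = ℓ := by rw [SimpleGraph.dist_comm]; exact huv
      constructor
      · intro hlt; omega
      · intro hlt; rw [SimpleGraph.dist_self] at hlt; omega
    · rw [lex_dist_eq G H hG hau b ub, lex_dist_eq G H hG hav b vb]

lemma ncard_prod_univ [Fintype α] [Fintype β] (s : Set α) :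
    (s ×ˢ (Set.univ : Set β)).ncard = s.ncard * Fintype.card β := by
  have h1 := Nat.card_congr (Equiv.Set.prod s (Set.univ : Set β))
  rw [Nat.card_prod] at h1
  rw [← Nat.card_coe_set_eq, h1, Nat.card_coe_set_eq]
  congr 1
  rw [Nat.card_coe_set_eq, Set.ncard_univ, Nat.card_eq_fintype_card]

end Aux

theorem stmt1 {α β : Type*} [Fintype α] [Fintype β] [Nonempty β]
    (G : SimpleGraph α) (H : SimpleGraph β) (hG : G.Connected)
    (hcard : 2 ≤ Fintype.card α) (ℓ : ℕ) (hℓ : 3 ≤ ℓ) (hdiam : ℓ ≤ G.diam) :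
    IsDistBalanced (lexProd G H) ℓ ↔ IsDistBalanced G ℓ := by
  have hβ : 0 < Fintype.card β := Fintype.card_pos
  constructor
  · intro hbal u v huv
    obtain ⟨b⟩ := (inferInstance : Nonempty β)
    have hne : u ≠ v := by
      intro h; rw [h, SimpleGraph.dist_self] at huv; omega
    have hd : (lexProd G H).dist (u, b) (v, b) = ℓ := by
      rw [lex_dist_eq G H hG hne b b]; exact huv
    have key := hbal (u, b) (v, b) hd
    rw [closer_lex_eq G H hG hcard hℓ (u := (u, b)) (v := (v, b)) huv,
        closer_lex_eq G H hG hcard hℓ (u := (v, b)) (v := (u, b))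
          (by rw [SimpleGraph.dist_comm]; exact huv),
        ncard_prod_univ, ncard_prod_univ] at key
    exact Nat.eq_of_mul_eq_mul_right hβ key
  · intro hbal u v huv
    have hne : u.1 ≠ v.1 := by
      intro h
      have hle : (lexProd G H).dist u v ≤ 2 := by
        have := lex_dist_le_two G H hG hcard u.1 u.2 v.2
        rw [show ((u.1, u.2) : α × β) = u from rfl,
            show ((u.1, v.2) : α × β) = v by rw [h]] at this
        exact this
      omega
    have hdG : G.dist u.1 v.1 = ℓ := by
      rw [← huv, show u = (u.1, u.2) from rfl, show v = (v.1, v.2) from rfl,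
        lex_dist_eq G H hG hne u.2 v.2]
    rw [closer_lex_eq G H hG hcard hℓ hdG,
        closer_lex_eq G H hG hcard hℓ (u := v) (v := u)
          (by rw [SimpleGraph.dist_comm]; exact hdG),
        ncard_prod_univ, ncard_prod_univ, hbal u.1 v.1 hdG]
end

section
/- Let H be a finite graph with |V(H)| ≥ 2 and let G be a finite connected graph. Then the corona product G∘H is 2-distance-balanced if and only if G ≅ K₁ and H is locally regular (any two non-adjacent vertices of H have the same degree). -/
open SimpleGraph

/-- The corona product `G ∘ H`: vertices `(g, none)` form the copy of `G`, and for each `g`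
the vertices `(g, some h)` form the `g`-th copy of `H`, joined completely to `(g, none)`. -/
def corona {α β : Type*} (G : SimpleGraph α) (H : SimpleGraph β) :
    SimpleGraph (α × Option β) where
  Adj x y :=
    (x.2 = none ∧ y.2 = none ∧ G.Adj x.1 y.1) ∨
    (x.1 = y.1 ∧ x.2 = none ∧ y.2 ≠ none) ∨
    (x.1 = y.1 ∧ x.2 ≠ none ∧ y.2 = none) ∨
    (x.1 = y.1 ∧ ∃ h₁ h₂, x.2 = some h₁ ∧ y.2 = some h₂ ∧ H.Adj h₁ h₂)
  symm := by
    refine ⟨?_⟩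
    rintro x y (⟨h1, h2, h3⟩ | ⟨h1, h2, h3⟩ | ⟨h1, h2, h3⟩ | ⟨h1, h₁, h₂, e1, e2, ha⟩)
    · exact Or.inl ⟨h2, h1, h3.symm⟩
    · exact Or.inr (Or.inr (Or.inl ⟨h1.symm, h3, h2⟩))
    · exact Or.inr (Or.inl ⟨h1.symm, h3, h2⟩)
    · exact Or.inr (Or.inr (Or.inr ⟨h1.symm, h₂, h₁, e2, e1, ha.symm⟩))
  loopless := by
    refine ⟨?_⟩
    rintro x (⟨_, _, h⟩ | ⟨_, h1, h2⟩ | ⟨_, h1, h2⟩ | ⟨_, h₁, h₂, e1, e2, ha⟩)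
    · exact G.irrefl h
    · exact h2 h1
    · exact h1 h2
    · rw [e1] at e2; injection e2 with e; exact H.irrefl (e ▸ ha)

section Aux

variable {α β : Type*} {G : SimpleGraph α} {H : SimpleGraph β}

/-- The embedding of `G` into the corona. -/
def coronaHom (G : SimpleGraph α) (H : SimpleGraph β) : G →g corona G H where
  toFun a := (a, none)
  map_rel' := fun h => Or.inl ⟨rfl, rfl, h⟩

lemma corona_adj_none_some (g : α) (h : β) : (corona G H).Adj (g, none) (g, some h) :=
  Or.inr (Or.inl ⟨rfl, rfl, by simp⟩)

lemma corona_reach_none (x : α × Option β) : (corona G H).Reachable x (x.1, none) := by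
  obtain ⟨g, (_ | h)⟩ := x
  · exact Reachable.refl _
  · exact ((corona_adj_none_some g h).symm).reachable

lemma corona_connected (hG : G.Connected) : (corona G H).Connected := by
  rw [connected_iff]
  refine ⟨fun x y => ?_, ?_⟩
  · refine (corona_reach_none x).trans (Reachable.trans ?_ (corona_reach_none y).symm)
    exact Reachable.map (coronaHom G H) (hG.preconnected x.1 y.1)
  · obtain ⟨a⟩ := hG.nonempty
    exact ⟨(a, none)⟩

lemma corona_adj_first {x z : α × Option β} (h : (corona G H).Adj x z) :
    x.1 = z.1 ∨ G.Adj x.1 z.1 := by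
  rcases h with ⟨_, _, h⟩ | ⟨h, _, _⟩ | ⟨h, _, _⟩ | ⟨h, _⟩
  · exact Or.inr h
  · exact Or.inl h
  · exact Or.inl h
  · exact Or.inl h

lemma corona_adj_first_of_some {x z : α × Option β} (hx : x.2 ≠ none)
    (h : (corona G H).Adj x z) : x.1 = z.1 := by
  rcases h with ⟨h1, _, _⟩ | ⟨_, h1, _⟩ | ⟨h1, _, _⟩ | ⟨h1, _⟩ <;>
    first | exact h1 | exact absurd h1 hx

lemma corona_walk_lower (hG : G.Connected) {x y : α × Option β}
    (p : (corona G H).Walk x y) : G.dist x.1 y.1 ≤ p.length := by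
  induction p with
  | nil => simp [SimpleGraph.dist_self]
  | @cons x z y h q ih =>
    have h1 : G.dist x.1 z.1 ≤ 1 := by
      rcases corona_adj_first h with h' | h'
      · rw [h', SimpleGraph.dist_self]; omega
      · exact le_of_eq (SimpleGraph.dist_eq_one_iff_adj.mpr h')
    have := hG.dist_triangle (u := x.1) (v := z.1) (w := y.1)
    simp only [Walk.length_cons]
    omega

lemma corona_walk_lower_some_left (hG : G.Connected) {x y : α × Option β}
    (hx : x.2 ≠ none) (hxy : x.1 ≠ y.1) (p : (corona G H).Walk x y) :
    G.dist x.1 y.1 + 1 ≤ p.length := by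
  cases p with
  | nil => exact absurd rfl hxy
  | @cons _ z _ h q =>
    have hz : x.1 = z.1 := corona_adj_first_of_some hx h
    have := corona_walk_lower hG q
    rw [hz]
    simp only [Walk.length_cons]
    omega

lemma corona_walk_lower_some_both (hG : G.Connected) {x y : α × Option β}
    (hx : x.2 ≠ none) (hy : y.2 ≠ none) (hxy : x.1 ≠ y.1) (p : (corona G H).Walk x y) :
    G.dist x.1 y.1 + 2 ≤ p.length := by
  cases p with
  | nil => exact absurd rfl hxy
  | @cons _ z _ h q =>
    have hz : x.1 = z.1 := corona_adj_first_of_some hx h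
    have hzy : y.1 ≠ z.1 := fun hc => hxy (hz.trans hc.symm)
    have := corona_walk_lower_some_left hG hy hzy q.reverse
    rw [Walk.length_reverse] at this
    rw [hz, SimpleGraph.dist_comm]
    simp only [Walk.length_cons]
    omega

lemma corona_dist_lower (hG : G.Connected) (x y : α × Option β) :
    G.dist x.1 y.1 ≤ (corona G H).dist x y := by
  obtain ⟨p, hp⟩ := ((corona_connected hG).exists_walk_length_eq_dist x y)
  exact hp ▸ corona_walk_lower hG p

lemma corona_dist_lower_some_left (hG : G.Connected) {x y : α × Option β}
    (hx : x.2 ≠ none) (hxy : x.1 ≠ y.1) :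
    G.dist x.1 y.1 + 1 ≤ (corona G H).dist x y := by
  obtain ⟨p, hp⟩ := ((corona_connected hG).exists_walk_length_eq_dist x y)
  exact hp ▸ corona_walk_lower_some_left hG hx hxy p

lemma corona_dist_lower_some_right (hG : G.Connected) {x y : α × Option β}
    (hy : y.2 ≠ none) (hxy : x.1 ≠ y.1) :
    G.dist x.1 y.1 + 1 ≤ (corona G H).dist x y := by
  rw [SimpleGraph.dist_comm (G := corona G H), SimpleGraph.dist_comm (G := G)]
  exact corona_dist_lower_some_left hG hy (Ne.symm hxy)

lemma corona_dist_lower_some_both (hG : G.Connected) {x y : α × Option β}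
    (hx : x.2 ≠ none) (hy : y.2 ≠ none) (hxy : x.1 ≠ y.1) :
    G.dist x.1 y.1 + 2 ≤ (corona G H).dist x y := by
  obtain ⟨p, hp⟩ := ((corona_connected hG).exists_walk_length_eq_dist x y)
  exact hp ▸ corona_walk_lower_some_both hG hx hy hxy p

lemma corona_dist_ub_none_none (hG : G.Connected) (a b : α) :
    (corona G H).dist (a, none) (b, none) ≤ G.dist a b := by
  obtain ⟨p, hp⟩ := hG.exists_walk_length_eq_dist a b
  have := SimpleGraph.dist_le (p.map (coronaHom G H))
  rwa [Walk.length_map, hp] at this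

lemma corona_dist_ub_some_none (hG : G.Connected) (a b : α) (h : β) :
    (corona G H).dist (a, some h) (b, none) ≤ G.dist a b + 1 := by
  obtain ⟨p, hp⟩ := hG.exists_walk_length_eq_dist a b
  have hadj : (corona G H).Adj (a, some h) (a, none) := (corona_adj_none_some a h).symm
  have := SimpleGraph.dist_le (Walk.cons hadj (p.map (coronaHom G H)))
  have hl : (Walk.cons hadj (p.map (coronaHom G H))).length =
      (p.map (coronaHom G H)).length + 1 := rfl
  rwa [hl, Walk.length_map, hp] at this

/-! ### The case `|α| = 1` -/

lemma corona_dist_two_of_singleton [Subsingleton α] (hG : G.Connected)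
    {x y : α × Option β} (hne : x ≠ y) (hadj : ¬(corona G H).Adj x y) :
    (corona G H).dist x y = 2 := by
  have hfst : x.1 = y.1 := Subsingleton.elim _ _
  have h0 : (corona G H).dist x y ≠ 0 := fun hc =>
    hne ((corona_connected hG).dist_eq_zero_iff.mp hc)
  have h1 : (corona G H).dist x y ≠ 1 := fun hc =>
    hadj (SimpleGraph.dist_eq_one_iff_adj.mp hc)
  obtain ⟨g, (_ | hx)⟩ := x
  · obtain ⟨g', (_ | hy)⟩ := y
    · exact absurd (by simpa using hfst) hne
    · exact absurd (Or.inr (Or.inl ⟨hfst, rfl, by simp⟩)) hadj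
  · obtain ⟨g', (_ | hy)⟩ := y
    · exact absurd (Or.inr (Or.inr (Or.inl ⟨hfst, by simp, rfl⟩))) hadj
    · -- both `some`, walk of length 2 through the centre
      have e1 : (corona G H).Adj (g, some hx) (g, none) :=
        (corona_adj_none_some g hx).symm
      have e2 : (corona G H).Adj (g, none) (g', some hy) :=
        Or.inr (Or.inl ⟨(hfst : g = g'), rfl, by simp⟩)
      have := SimpleGraph.dist_le (Walk.cons e1 (Walk.cons e2 Walk.nil))
      simp only [Walk.length_cons, Walk.length_nil] at this
      omega

lemma closerSet_singleton [Subsingleton α] (hG : G.Connected) (g : α)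
    {h₁ h₂ : β} (hne : h₁ ≠ h₂) (hadj : ¬H.Adj h₁ h₂) :
    closerSet (corona G H) (g, some h₁) (g, some h₂) =
      insert (g, some h₁)
        ((fun h => ((g, some h) : α × Option β)) ''
          (H.neighborSet h₁ \ H.neighborSet h₂)) := by
  have huv_ne : ((g, some h₁) : α × Option β) ≠ (g, some h₂) := by
    simp [hne]
  have huv_nadj : ¬(corona G H).Adj (g, some h₁) (g, some h₂) := by
    rintro (⟨hc, _⟩ | ⟨_, hc, _⟩ | ⟨_, _, hc⟩ | ⟨_, a, b, ea, eb, hab⟩) <;>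
      simp_all
  ext x
  simp only [closerSet, Set.mem_setOf_eq, Set.mem_insert_iff, Set.mem_image,
    Set.mem_diff, SimpleGraph.mem_neighborSet]
  constructor
  · intro hx
    by_cases hxu : x = (g, some h₁)
    · exact Or.inl hxu
    right
    have hxv : x ≠ (g, some h₂) := by
      rintro rfl
      rw [SimpleGraph.dist_self] at hx
      omega
    have hxv_nadj : ¬(corona G H).Adj x (g, some h₂) := by
      intro hc
      rw [SimpleGraph.dist_eq_one_iff_adj.mpr hc] at hx
      have : (corona G H).dist x (g, some h₁) = 0 := by omega
      rw [(corona_connected hG).dist_eq_zero_iff] at this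
      exact hxu this
    have hv2 : (corona G H).dist x (g, some h₂) = 2 :=
      corona_dist_two_of_singleton hG hxv hxv_nadj
    rw [hv2] at hx
    have hx0 : (corona G H).dist x (g, some h₁) ≠ 0 := fun hc =>
      hxu ((corona_connected hG).dist_eq_zero_iff.mp hc)
    have hxu_adj : (corona G H).Adj x (g, some h₁) := by
      apply SimpleGraph.dist_eq_one_iff_adj.mp; omega
    rcases hxu_adj with ⟨_, hc, _⟩ | ⟨hg, hx2, _⟩ | ⟨_, _, hc⟩ | ⟨hg, a, b, ea, eb, hab⟩
    · simp at hc
    · -- x is the centre, but then x is adjacent to (g, some h₂) too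
      exact absurd (Or.inr (Or.inl ⟨(Subsingleton.elim _ _ : x.1 = g), hx2, by simp⟩))
        hxv_nadj
    · simp at hc
    · -- x = (g, some a) with H.Adj a h₁
      have hb : h₁ = b := by simpa using eb
      subst hb
      refine ⟨a, ⟨hab.symm, ?_⟩, ?_⟩
      · intro hc
        exact hxv_nadj (Or.inr (Or.inr (Or.inr
          ⟨(Subsingleton.elim _ _ : x.1 = g), a, h₂, ea, rfl, hc.symm⟩)))
      · have : x.1 = g := Subsingleton.elim _ _
        exact Prod.ext this.symm ea.symm
  · rintro (rfl | ⟨a, ⟨ha1, ha2⟩, rfl⟩)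
    · rw [SimpleGraph.dist_self, corona_dist_two_of_singleton hG huv_ne huv_nadj]
      omega
    · have hane : a ≠ h₂ := by rintro rfl; exact hadj ha1
      have hu_adj : (corona G H).Adj (g, some a) (g, some h₁) :=
        Or.inr (Or.inr (Or.inr ⟨rfl, a, h₁, rfl, rfl, ha1.symm⟩))
      have hv_nadj : ¬(corona G H).Adj (g, some a) (g, some h₂) := by
        rintro (⟨hc, _⟩ | ⟨_, hc, _⟩ | ⟨_, _, hc⟩ | ⟨_, c, d, ec, ed, hcd⟩)
        · simp at hc
        · simp at hc
        · simp at hc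
        · have : c = a := by simpa using ec.symm
          have : d = h₂ := by simpa using ed.symm
          subst_vars
          exact ha2 hcd.symm
      rw [SimpleGraph.dist_eq_one_iff_adj.mpr hu_adj,
        corona_dist_two_of_singleton hG (by simp [hane]) hv_nadj]
      omega

lemma closerSet_singleton_ncard [Fintype α] [Fintype β] [Subsingleton α]
    (hG : G.Connected) (g : α)
    {h₁ h₂ : β} (hne : h₁ ≠ h₂) (hadj : ¬H.Adj h₁ h₂) :
    (closerSet (corona G H) (g, some h₁) (g, some h₂)).ncard =
      (H.neighborSet h₁ \ H.neighborSet h₂).ncard + 1 := by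
  rw [closerSet_singleton hG g hne hadj]
  have hinj : Function.Injective (fun h => ((g, some h) : α × Option β)) := by
    intro a b hab; simpa using hab
  have hnm : ((g, some h₁) : α × Option β) ∉
      (fun h => ((g, some h) : α × Option β)) ''
        (H.neighborSet h₁ \ H.neighborSet h₂) := by
    rintro ⟨a, ⟨ha1, _⟩, hea⟩
    have : a = h₁ := by simpa using hea
    subst this
    exact H.irrefl ha1
  rw [Set.ncard_insert_of_notMem hnm (Set.toFinite _),
    Set.ncard_image_of_injective _ hinj]

/-! ### Imbalance when `|α| ≥ 2` -/

lemma corona_not_balanced [Fintype α] [Fintype β] (hG : G.Connected)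
    (hb : Nonempty β) {g₁ g₂ : α} (hadj : G.Adj g₁ g₂) :
    ¬IsDistBalanced (corona G H) 2 := by
  intro hbal
  obtain ⟨h₀⟩ := hb
  have hne : g₁ ≠ g₂ := hadj.ne
  have hd1 : G.dist g₁ g₂ = 1 := SimpleGraph.dist_eq_one_iff_adj.mpr hadj
  set u : α × Option β := (g₁, some h₀) with hu
  set v : α × Option β := (g₂, none) with hv
  have hlow : G.dist g₁ g₂ + 1 ≤ (corona G H).dist u v :=
    corona_dist_lower_some_left (x := u) (y := v) hG (by simp [hu]) (by simp [hu, hv, hne])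
  have hup : (corona G H).dist u v ≤ G.dist g₁ g₂ + 1 :=
    corona_dist_ub_some_none hG g₁ g₂ h₀
  have hduv : (corona G H).dist u v = 2 := by omega
  have hkey := hbal u v hduv
  -- upper bound on |closerSet u v|
  have hsub : closerSet (corona G H) u v ⊆
      (fun h => ((g₁, some h) : α × Option β)) '' Set.univ := by
    intro x hx
    simp only [closerSet, Set.mem_setOf_eq] at hx
    by_cases hx1 : x.1 = g₁
    · obtain ⟨gx, (_ | hx2)⟩ := x
      · -- centre of copy g₁
        exfalso
        simp only at hx1
        have hgd : G.dist gx g₂ = 1 := by rw [hx1]; exact hd1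
        have hxv : (corona G H).dist ((gx, none) : α × Option β) v ≤ 1 := by
          rw [hv]
          exact le_trans (corona_dist_ub_none_none hG gx g₂) (le_of_eq hgd)
        have hxu : 0 < (corona G H).dist ((gx, none) : α × Option β) u :=
          (corona_connected hG).pos_dist_of_ne (by simp [hu])
        omega
      · simp only at hx1
        exact ⟨hx2, Set.mem_univ _, by simp [hx1]⟩
    · exfalso
      obtain ⟨gx, (_ | hx2)⟩ := x
      · simp only at hx1
        have hxu : G.dist gx g₁ + 1 ≤ (corona G H).dist (gx, none) u :=
          corona_dist_lower_some_right (x := ((gx, none) : α × Option β)) (y := u) hG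
            (by simp [hu]) (by simpa [hu] using hx1)
        have hxv : (corona G H).dist ((gx, none) : α × Option β) v ≤ G.dist gx g₂ :=
          corona_dist_ub_none_none hG gx g₂
        have htri : G.dist gx g₂ ≤ G.dist gx g₁ + G.dist g₁ g₂ := hG.dist_triangle
        omega
      · simp only at hx1
        have hxu : G.dist gx g₁ + 2 ≤ (corona G H).dist (gx, some hx2) u :=
          corona_dist_lower_some_both (x := ((gx, some hx2) : α × Option β)) (y := u) hG
            (by simp) (by simp [hu]) (by simpa [hu] using hx1)
        have hxv : (corona G H).dist ((gx, some hx2) : α × Option β) v ≤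
            G.dist gx g₂ + 1 := corona_dist_ub_some_none hG gx g₂ hx2
        have htri : G.dist gx g₂ ≤ G.dist gx g₁ + G.dist g₁ g₂ := hG.dist_triangle
        omega
  have hub : (closerSet (corona G H) u v).ncard ≤ Fintype.card β := by
    calc (closerSet (corona G H) u v).ncard ≤
        ((fun h => ((g₁, some h) : α × Option β)) '' Set.univ).ncard :=
          Set.ncard_le_ncard hsub (Set.toFinite _)
      _ = (Set.univ : Set β).ncard :=
          Set.ncard_image_of_injective _ (fun a b hab => by simpa using hab)
      _ = Fintype.card β := by rw [Set.ncard_univ, Nat.card_eq_fintype_card]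
  -- lower bound on |closerSet v u|
  have hsup : insert v ((fun h => ((g₂, some h) : α × Option β)) '' Set.univ) ⊆
      closerSet (corona G H) v u := by
    rintro x (rfl | ⟨h, _, rfl⟩)
    · simp only [closerSet, Set.mem_setOf_eq, SimpleGraph.dist_self]
      rw [SimpleGraph.dist_comm, hduv]
      omega
    · simp only [closerSet, Set.mem_setOf_eq]
      have hxv : (corona G H).Adj ((g₂, some h) : α × Option β) v :=
        Or.inr (Or.inr (Or.inl ⟨rfl, by simp, rfl⟩))
      have hxu : G.dist g₂ g₁ + 2 ≤ (corona G H).dist ((g₂, some h) : α × Option β) u :=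
        corona_dist_lower_some_both (x := ((g₂, some h) : α × Option β)) (y := u) hG
          (by simp) (by simp [hu]) (by simp [hu, hne.symm])
      rw [SimpleGraph.dist_eq_one_iff_adj.mpr hxv]
      omega
  have hlb : Fintype.card β + 1 ≤ (closerSet (corona G H) v u).ncard := by
    have hv_nm : v ∉ (fun h => ((g₂, some h) : α × Option β)) '' Set.univ := by
      rintro ⟨h, _, hc⟩
      simp [hv] at hc
    calc Fintype.card β + 1
        = ((fun h => ((g₂, some h) : α × Option β)) '' Set.univ).ncard + 1 := by
          rw [Set.ncard_image_of_injective _ (fun a b hab => by simpa using hab),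
            Set.ncard_univ, Nat.card_eq_fintype_card]
      _ = (insert v ((fun h => ((g₂, some h) : α × Option β)) '' Set.univ)).ncard := by
          rw [Set.ncard_insert_of_notMem hv_nm (Set.toFinite _)]
      _ ≤ (closerSet (corona G H) v u).ncard :=
          Set.ncard_le_ncard hsup (Set.toFinite _)
  omega

end Aux

theorem stmt2 {α β : Type*} [Fintype α] [Fintype β]
    (G : SimpleGraph α) (H : SimpleGraph β) (hG : G.Connected)
    (hH : 2 ≤ Fintype.card β) :
    IsDistBalanced (corona G H) 2 ↔
      (Fintype.card α = 1 ∧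
        ∀ h₁ h₂ : β, h₁ ≠ h₂ → ¬H.Adj h₁ h₂ →
          (H.neighborSet h₁).ncard = (H.neighborSet h₂).ncard) := by
  have hβ : Nonempty β := Fintype.card_pos_iff.mp (by omega)
  have hα : Nonempty α := hG.nonempty
  -- degree equality ↔ diff-ncard equality
  have hdeg : ∀ h₁ h₂ : β,
      ((H.neighborSet h₁ \ H.neighborSet h₂).ncard =
        (H.neighborSet h₂ \ H.neighborSet h₁).ncard ↔
      (H.neighborSet h₁).ncard = (H.neighborSet h₂).ncard) := by
    intro h₁ h₂
    have e1 := Set.ncard_inter_add_ncard_diff_eq_ncard (H.neighborSet h₁)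
      (H.neighborSet h₂) (Set.toFinite _)
    have e2 := Set.ncard_inter_add_ncard_diff_eq_ncard (H.neighborSet h₂)
      (H.neighborSet h₁) (Set.toFinite _)
    rw [Set.inter_comm] at e2
    omega
  constructor
  · intro hbal
    have hcard : Fintype.card α = 1 := by
      by_contra hc
      have h2 : 2 ≤ Fintype.card α := by
        have := Fintype.card_pos_iff.mpr hα
        omega
      obtain ⟨a, b, hab⟩ := Fintype.exists_pair_of_one_lt_card (α := α) (by omega)
      obtain ⟨p⟩ := hG.preconnected a b
      cases p with
      | nil => exact hab rfl
      | cons h _ => exact corona_not_balanced (H := H) hG hβ h hbal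
    have : Subsingleton α := Fintype.card_le_one_iff_subsingleton.mp (le_of_eq hcard)
    refine ⟨hcard, fun h₁ h₂ hne hadj => ?_⟩
    obtain ⟨g⟩ := hα
    have hduv : (corona G H).dist (g, some h₁) (g, some h₂) = 2 := by
      apply corona_dist_two_of_singleton hG (by simp [hne])
      rintro (⟨hc, _⟩ | ⟨_, hc, _⟩ | ⟨_, _, hc⟩ | ⟨_, c, d, ec, ed, hcd⟩)
      · simp at hc
      · simp at hc
      · simp at hc
      · have hc1 : c = h₁ := by simpa using ec.symm
        have hd1 : d = h₂ := by simpa using ed.symm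
        subst_vars
        exact hadj hcd
    have hkey := hbal _ _ hduv
    rw [closerSet_singleton_ncard hG g hne hadj,
      closerSet_singleton_ncard hG g (Ne.symm hne)
        (fun hc => hadj hc.symm)] at hkey
    exact (hdeg h₁ h₂).mp (by omega)
  · rintro ⟨hcard, hreg⟩
    have : Subsingleton α := Fintype.card_le_one_iff_subsingleton.mp (le_of_eq hcard)
    intro u v huv
    have hne : u ≠ v := by
      rintro rfl
      rw [SimpleGraph.dist_self] at huv
      omega
    have hnadj : ¬(corona G H).Adj u v := fun hc => by
      rw [SimpleGraph.dist_eq_one_iff_adj.mpr hc] at huv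
      omega
    have hfst : u.1 = v.1 := Subsingleton.elim _ _
    obtain ⟨g, (_ | h₁)⟩ := u
    · obtain ⟨g', (_ | h₂)⟩ := v
      · exact absurd (by simpa using hfst) hne
      · exact absurd (Or.inr (Or.inl ⟨hfst, rfl, by simp⟩)) hnadj
    · obtain ⟨g', (_ | h₂)⟩ := v
      · exact absurd (Or.inr (Or.inr (Or.inl ⟨hfst, by simp, rfl⟩))) hnadj
      · have hg : g = g' := hfst
        subst hg
        have hne' : h₁ ≠ h₂ := by
          rintro rfl; exact hne rfl
        have hadj' : ¬H.Adj h₁ h₂ := fun hc =>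
          hnadj (Or.inr (Or.inr (Or.inr ⟨rfl, h₁, h₂, rfl, rfl, hc⟩)))
        rw [closerSet_singleton_ncard hG g hne' hadj',
          closerSet_singleton_ncard hG g (Ne.symm hne') (fun hc => hadj' hc.symm)]
        have := (hdeg h₁ h₂).mpr (hreg h₁ h₂ hne' hadj')
        omega
end

section
/- Let v be a universal vertex of a finite connected graph G with diam(G) ≥ 2. Then G is 2-distance-balanced if and only if G − v is locally regular. -/
open SimpleGraph

theorem stmt3 {α : Type*} [Fintype α] (G : SimpleGraph α) (hG : G.Connected)
    (hdiam : 2 ≤ G.diam) (v : α) (hv : ∀ u, u ≠ v → G.Adj v u) :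
    IsDistBalanced G 2 ↔
      ∀ a b : {u : α // u ≠ v}, a ≠ b → ¬(G.induce {u : α | u ≠ v}).Adj a b →
        ((G.induce {u : α | u ≠ v}).neighborSet a).ncard
          = ((G.induce {u : α | u ≠ v}).neighborSet b).ncard := by
  classical
  have hva : ∀ u : α, u ≠ v → G.Adj u v := fun u hu => (hv u hu).symm
  -- every distance is at most 2
  have hdle : ∀ x y : α, G.dist x y ≤ 2 := by
    intro x y
    by_cases hxy : x = y
    · simp [hxy, dist_self]
    by_cases hxv : x = v
    · subst hxv
      exact le_trans (dist_eq_one_iff_adj.mpr (hv y (Ne.symm hxy))).le one_le_two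
    by_cases hyv : y = v
    · subst hyv
      exact le_trans (dist_eq_one_iff_adj.mpr (hva x hxv)).le one_le_two
    · exact G.dist_le (Walk.cons (hva x hxv) (Walk.cons (hv y hyv) Walk.nil))
  have key : ∀ x y : α, x ≠ y → ¬ G.Adj x y → G.dist x y = 2 := by
    intro x y hne hnadj
    have h0 : G.dist x y ≠ 0 := fun h => hne (hG.dist_eq_zero_iff.mp h)
    have h1 : G.dist x y ≠ 1 := fun h => hnadj (dist_eq_one_iff_adj.mp h)
    have := hdle x y; omega
  -- characterize closerSet for a pair at distance 2
  have hcloser : ∀ u w : α, u ≠ w → ¬ G.Adj u w →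
      closerSet G u w = insert u (G.neighborSet u \ G.neighborSet w) := by
    intro u w hne hnadj
    ext x
    simp only [closerSet, Set.mem_setOf_eq, Set.mem_insert_iff, Set.mem_diff,
      mem_neighborSet]
    constructor
    · intro h
      have hxw := hdle x w
      have hxu1 : G.dist x u ≤ 1 := by omega
      rcases Nat.lt_or_ge (G.dist x u) 1 with h0 | h1
      · left
        exact hG.dist_eq_zero_iff.mp (by omega)
      · have hxu : G.dist x u = 1 := le_antisymm hxu1 h1
        have hadjxu : G.Adj x u := dist_eq_one_iff_adj.mp hxu
        right
        refine ⟨hadjxu.symm, fun hadjwx => ?_⟩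
        have : G.dist x w ≤ 1 := (dist_eq_one_iff_adj.mpr hadjwx.symm).le
        omega
    · rintro (rfl | ⟨hadjux, hnadjwx⟩)
      · rw [hG.dist_eq_zero_iff.mpr rfl, key x w hne hnadj]; omega
      · have hxw : x ≠ w := fun h => hnadj (h ▸ hadjux)
        rw [dist_eq_one_iff_adj.mpr hadjux.symm,
          key x w hxw (fun h => hnadjwx h.symm)]
        omega
  -- cardinality of closerSet
  have hcard : ∀ u w : α, u ≠ w → ¬ G.Adj u w →
      (closerSet G u w).ncard + (G.neighborSet u ∩ G.neighborSet w).ncard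
        = G.degree u + 1 := by
    intro u w hne hnadj
    rw [hcloser u w hne hnadj,
      Set.ncard_insert_of_notMem (fun h => G.irrefl h.1) (Set.toFinite _)]
    have h2 := Set.ncard_inter_add_ncard_diff_eq_ncard (G.neighborSet u)
      (G.neighborSet w) (Set.toFinite _)
    have h3 : (G.neighborSet u).ncard = G.degree u := by
      rw [← G.card_neighborSet_eq_degree, Set.ncard_eq_toFinset_card',
        Set.toFinset_card]
    omega
  -- the intersection contains v, so it is nonempty
  have hmem : ∀ u w : α, u ≠ v → w ≠ v →
      1 ≤ (G.neighborSet u ∩ G.neighborSet w).ncard := by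
    intro u w hu hw
    have : v ∈ G.neighborSet u ∩ G.neighborSet w := ⟨hva u hu, hva w hw⟩
    exact (Set.ncard_pos (Set.toFinite _)).mpr ⟨v, this⟩
  -- degree in the induced graph
  have hideg : ∀ a : {u : α // u ≠ v},
      ((G.induce {u : α | u ≠ v}).neighborSet a).ncard + 1 = G.degree ↑a := by
    intro a
    have himg : Subtype.val '' ((G.induce {u : α | u ≠ v}).neighborSet a)
        = G.neighborSet ↑a \ {v} := by
      ext x
      simp only [Set.mem_image, mem_neighborSet, Set.mem_diff,
        Set.mem_singleton_iff]
      constructor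
      · rintro ⟨b, hb, rfl⟩
        exact ⟨hb, b.2⟩
      · rintro ⟨hadj, hxv⟩
        exact ⟨⟨x, hxv⟩, hadj, rfl⟩
    have h1 : ((G.induce {u : α | u ≠ v}).neighborSet a).ncard
        = (G.neighborSet ↑a \ {v}).ncard := by
      rw [← himg, Set.ncard_image_of_injective _ Subtype.val_injective]
    have hvmem : v ∈ G.neighborSet ↑a := hva ↑a a.2
    have h2 : (G.neighborSet ↑a \ {v}).ncard + 1 = (G.neighborSet ↑a).ncard :=
      Set.ncard_diff_singleton_add_one hvmem (Set.toFinite _)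
    have h3 : (G.neighborSet ↑a).ncard = G.degree ↑a := by
      rw [← G.card_neighborSet_eq_degree, Set.ncard_eq_toFinset_card',
        Set.toFinset_card]
    rw [h1, h2, h3]
  -- distance two means: distinct, nonadjacent, and both differ from v
  have hd2 : ∀ u w : α, G.dist u w = 2 → u ≠ w ∧ ¬ G.Adj u w ∧ u ≠ v ∧ w ≠ v := by
    intro u w h
    have hne : u ≠ w := fun he => by rw [he, dist_self] at h; omega
    have hnadj : ¬ G.Adj u w := fun ha => by
      have := dist_eq_one_iff_adj.mpr ha; omega
    have huv : u ≠ v := fun he => hnadj (he ▸ hv w (fun hw => hne (hw ▸ he ▸ rfl)))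
    have hwv : w ≠ v := fun he => hnadj (he ▸ hva u (fun hu => hne (he ▸ hu)))
    exact ⟨hne, hnadj, huv, hwv⟩
  constructor
  · intro hbal a b hab hnadj
    have hnadj' : ¬ G.Adj ↑a ↑b := by
      intro h
      exact hnadj h
    have hne : (a : α) ≠ ↑b := fun h => hab (Subtype.ext h)
    have hd := key ↑a ↑b hne hnadj'
    have := hbal ↑a ↑b hd
    have h1 := hcard ↑a ↑b hne hnadj'
    have h2 := hcard ↑b ↑a hne.symm (fun h => hnadj' h.symm)
    rw [Set.inter_comm] at h2
    have hdeg : G.degree ↑a = G.degree ↑b := by omega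
    have ha := hideg a
    have hb := hideg b
    omega
  · intro hreg u w hd
    obtain ⟨hne, hnadj, huv, hwv⟩ := hd2 u w hd
    have hdeg : G.degree u = G.degree w := by
      have := hreg ⟨u, huv⟩ ⟨w, hwv⟩ (fun h => hne (congrArg Subtype.val h))
        (fun h => hnadj h)
      have ha := hideg ⟨u, huv⟩
      have hb := hideg ⟨w, hwv⟩
      simp only at ha hb
      omega
    have h1 := hcard u w hne hnadj
    have h2 := hcard w u hne.symm (fun h => hnadj h.symm)
    rw [Set.inter_comm] at h2
    omega
end

section
/- Let n ≥ 2 and let x = (g₁,h₁), y = (g₂,h₂) be vertices of Γ = Kₙ □ H with g₁ ≠ g₂. Then for a vertex z = (g,h) of Γ: if g = g₁, then z ∈ W_{xy} iff d_H(h,h₁) ≤ d_H(h,h₂); if g = g₂, then z ∈ W_{xy} iff d_H(h,h₁) < d_H(h,h₂) and d_H(h₁,h) ≠ d_H(h₂,h) − 1; and if g ∉ {g₁,g₂}, then z ∈ W_{xy} iff d_H(h,h₁) < d_H(h,h₂). -/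
open SimpleGraph

lemma boxProd_dist_le_walk {α β : Type*} {G : SimpleGraph α} {H : SimpleGraph β}
    (hG : G.Connected) (hH : H.Connected) {x y : α × β} (w : (G □ H).Walk x y) :
    G.dist x.1 y.1 + H.dist x.2 y.2 ≤ w.length := by
  induction w with
  | nil => simp
  | @cons u v z hadj w ih =>
    rw [SimpleGraph.Walk.length_cons]
    rcases SimpleGraph.boxProd_adj.mp hadj with ⟨h1, h2⟩ | ⟨h1, h2⟩
    · have t : G.dist u.1 z.1 ≤ G.dist u.1 v.1 + G.dist v.1 z.1 := hG.dist_triangle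
      have d1 : G.dist u.1 v.1 ≤ 1 := by
        simpa using SimpleGraph.dist_le h1.toWalk
      have e : H.dist u.2 z.2 = H.dist v.2 z.2 := by rw [h2]
      omega
    · have t : H.dist u.2 z.2 ≤ H.dist u.2 v.2 + H.dist v.2 z.2 := hH.dist_triangle
      have d1 : H.dist u.2 v.2 ≤ 1 := by
        simpa using SimpleGraph.dist_le h1.toWalk
      have e : G.dist u.1 z.1 = G.dist v.1 z.1 := by rw [h2]
      omega

lemma boxProd_dist {α β : Type*} {G : SimpleGraph α} {H : SimpleGraph β}
    (hG : G.Connected) (hH : H.Connected) (a c : α) (b d : β) :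
    (G □ H).dist (a, b) (c, d) = G.dist a c + H.dist b d := by
  apply le_antisymm
  · obtain ⟨p, hp⟩ := hG.exists_walk_length_eq_dist a c
    obtain ⟨q, hq⟩ := hH.exists_walk_length_eq_dist b d
    calc (G □ H).dist (a, b) (c, d) ≤ ((p.boxProdLeft H b).append (q.boxProdRight G c)).length :=
          SimpleGraph.dist_le _
      _ = G.dist a c + H.dist b d := by
          rw [SimpleGraph.Walk.length_append]
          simp only [SimpleGraph.Walk.boxProdLeft, SimpleGraph.Walk.boxProdRight,
            SimpleGraph.Walk.length_map]
          exact congrArg₂ (· + ·) ((SimpleGraph.Walk.length_map _ _).trans hp)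
            ((SimpleGraph.Walk.length_map _ _).trans hq)
  · obtain ⟨w, hw⟩ := (hG.boxProd hH).exists_walk_length_eq_dist (a, b) (c, d)
    have := boxProd_dist_le_walk hG hH w
    simpa [hw] using this

theorem stmt9 {β : Type*} [Fintype β] (H : SimpleGraph β) (hH : H.Connected)
    (n : ℕ) (hn : 2 ≤ n) (g₁ g₂ : Fin n) (h₁ h₂ : β) (hg : g₁ ≠ g₂)
    (g : Fin n) (h : β) :
    (g = g₁ →
      ((g, h) ∈ closerSet ((⊤ : SimpleGraph (Fin n)) □ H) (g₁, h₁) (g₂, h₂) ↔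
        H.dist h h₁ ≤ H.dist h h₂)) ∧
    (g = g₂ →
      ((g, h) ∈ closerSet ((⊤ : SimpleGraph (Fin n)) □ H) (g₁, h₁) (g₂, h₂) ↔
        H.dist h h₁ < H.dist h h₂ ∧ H.dist h₁ h ≠ H.dist h₂ h - 1)) ∧
    (g ≠ g₁ → g ≠ g₂ →
      ((g, h) ∈ closerSet ((⊤ : SimpleGraph (Fin n)) □ H) (g₁, h₁) (g₂, h₂) ↔
        H.dist h h₁ < H.dist h h₂)) := by
  have hK : (⊤ : SimpleGraph (Fin n)).Connected := by
    have : Nonempty (Fin n) := ⟨⟨0, by omega⟩⟩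
    exact SimpleGraph.connected_top
  have key : ∀ (a c : Fin n) (b d : β),
      ((⊤ : SimpleGraph (Fin n)) □ H).dist (a, b) (c, d)
        = (⊤ : SimpleGraph (Fin n)).dist a c + H.dist b d :=
    fun a c b d => boxProd_dist hK hH a c b d
  have mem_iff : ∀ (a c : Fin n) (b d : β),
      ((g, h) ∈ closerSet ((⊤ : SimpleGraph (Fin n)) □ H) (a, b) (c, d) ↔
        (⊤ : SimpleGraph (Fin n)).dist g a + H.dist h b <
          (⊤ : SimpleGraph (Fin n)).dist g c + H.dist h d) := by
    intro a c b d
    simp only [closerSet, Set.mem_setOf_eq, key]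
  refine ⟨?_, ?_, ?_⟩
  · rintro rfl
    rw [mem_iff, SimpleGraph.dist_self, SimpleGraph.dist_top_of_ne hg]
    omega
  · rintro rfl
    rw [mem_iff, SimpleGraph.dist_self, SimpleGraph.dist_top_of_ne (Ne.symm hg)]
    have e1 : H.dist h₁ h = H.dist h h₁ := SimpleGraph.dist_comm
    have e2 : H.dist h₂ h = H.dist h h₂ := SimpleGraph.dist_comm
    rw [e1, e2]
    omega
  · intro hg1 hg2
    rw [mem_iff, SimpleGraph.dist_top_of_ne hg1, SimpleGraph.dist_top_of_ne hg2]
    omega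
end

section
/- Let n ≥ 2, ℓ ≥ 2, and let H be a finite connected graph of diameter at least ℓ which is both ℓ-distance-balanced and (ℓ−1)-distance-balanced. Then Kₙ □ H is ℓ-distance-balanced if and only if for every h₁, h₂ ∈ V(H) with d_H(h₁,h₂) = ℓ−1, |{h ∈ W_{h₁h₂} : d(h₁,h) = d(h₂,h) − 1}| = |{h ∈ W_{h₂h₁} : d(h₂,h) = d(h₁,h) − 1}|. -/
open SimpleGraph

private lemma ncard_prod' {γ δ : Type*} [Fintype γ] [Fintype δ] (s : Set γ) (t : Set δ) :
    (s ×ˢ t).ncard = s.ncard * t.ncard := by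
  classical
  rw [Set.ncard_eq_toFinset_card', Set.ncard_eq_toFinset_card' s, Set.ncard_eq_toFinset_card' t,
    Set.toFinset_prod, Finset.card_product]

private lemma dist_top' {m : ℕ} (a b : Fin m) :
    (⊤ : SimpleGraph (Fin m)).dist a b = if a = b then 0 else 1 := by
  split
  · next h => subst h; exact SimpleGraph.dist_self
  · next h => exact SimpleGraph.dist_eq_one_iff_adj.mpr ((top_adj a b).mpr h)

private lemma walk_len' {β : Type*} {m : ℕ} (H : SimpleGraph β) (hH : H.Connected) (hm : 0 < m) :
    ∀ {x y : Fin m × β} (w : ((⊤ : SimpleGraph (Fin m)) □ H).Walk x y),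
      (⊤ : SimpleGraph (Fin m)).dist x.1 y.1 + H.dist x.2 y.2 ≤ w.length := by
  have : Nonempty (Fin m) := ⟨⟨0, hm⟩⟩
  have hK : (⊤ : SimpleGraph (Fin m)).Connected := connected_top
  intro x y w
  induction w with
  | nil => simp
  | cons h p ih =>
    rename_i a b c
    rcases boxProd_adj.mp h with ⟨ha, he⟩ | ⟨ha, he⟩
    · have h1 : (⊤ : SimpleGraph (Fin m)).dist a.1 c.1 ≤
          (⊤ : SimpleGraph (Fin m)).dist a.1 b.1 + (⊤ : SimpleGraph (Fin m)).dist b.1 c.1 :=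
        hK.dist_triangle
      have h2 : (⊤ : SimpleGraph (Fin m)).dist a.1 b.1 = 1 :=
        SimpleGraph.dist_eq_one_iff_adj.mpr ha
      have h3 : H.dist a.2 c.2 = H.dist b.2 c.2 := by rw [he]
      simp only [SimpleGraph.Walk.length_cons]
      omega
    · have h1 : H.dist a.2 c.2 ≤ H.dist a.2 b.2 + H.dist b.2 c.2 := hH.dist_triangle
      have h2 : H.dist a.2 b.2 = 1 := SimpleGraph.dist_eq_one_iff_adj.mpr ha
      have h3 : (⊤ : SimpleGraph (Fin m)).dist a.1 c.1 = (⊤ : SimpleGraph (Fin m)).dist b.1 c.1 := by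
        rw [he]
      simp only [SimpleGraph.Walk.length_cons]
      omega

private lemma boxProd_dist' {β : Type*} {m : ℕ} (hm : 0 < m) (H : SimpleGraph β)
    (hH : H.Connected) (g₁ g₂ : Fin m) (h₁ h₂ : β) :
    ((⊤ : SimpleGraph (Fin m)) □ H).dist (g₁, h₁) (g₂, h₂) =
      (⊤ : SimpleGraph (Fin m)).dist g₁ g₂ + H.dist h₁ h₂ := by
  have : Nonempty (Fin m) := ⟨⟨0, hm⟩⟩
  have hK : (⊤ : SimpleGraph (Fin m)).Connected := connected_top
  have hGH : ((⊤ : SimpleGraph (Fin m)) □ H).Connected := hK.boxProd hH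
  apply le_antisymm
  · obtain ⟨p, hp⟩ := hK.exists_walk_length_eq_dist g₁ g₂
    obtain ⟨q, hq⟩ := hH.exists_walk_length_eq_dist h₁ h₂
    have := SimpleGraph.dist_le ((p.boxProdLeft H h₁).append
      (SimpleGraph.Walk.boxProdRight (⊤ : SimpleGraph (Fin m)) g₂ q))
    have e1 : (p.boxProdLeft H h₁).length = p.length := SimpleGraph.Walk.length_map _ _
    have e2 : (SimpleGraph.Walk.boxProdRight (⊤ : SimpleGraph (Fin m)) g₂ q).length = q.length :=
      SimpleGraph.Walk.length_map _ _
    rw [SimpleGraph.Walk.length_append, e1, e2] at this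
    simpa [SimpleGraph.Walk.length_append, SimpleGraph.Walk.boxProdLeft,
      SimpleGraph.Walk.boxProdRight, SimpleGraph.Walk.length_map, hp, hq] using this
  · obtain ⟨p, hp⟩ := hGH.exists_walk_length_eq_dist (g₁, h₁) (g₂, h₂)
    rw [← hp]
    exact walk_len' H hH hm p

private lemma sep_eq' {β : Type*} (H : SimpleGraph β) (h₁ h₂ : β) :
    {h ∈ closerSet H h₁ h₂ | H.dist h₁ h = H.dist h₂ h - 1}
      = {h | H.dist h h₁ + 1 = H.dist h h₂} := by
  ext h
  simp only [closerSet, Set.mem_sep_iff, Set.mem_setOf_eq]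
  rw [show H.dist h₁ h = H.dist h h₁ from SimpleGraph.dist_comm,
    show H.dist h₂ h = H.dist h h₂ from SimpleGraph.dist_comm]
  omega

private lemma count_key {β : Type*} [Fintype β] {m : ℕ} (H : SimpleGraph β) (hH : H.Connected)
    (hm : 0 < m) {g₁ g₂ : Fin m} (hg : g₁ ≠ g₂) (h₁ h₂ : β) :
    (closerSet ((⊤ : SimpleGraph (Fin m)) □ H) (g₁, h₁) (g₂, h₂)).ncard
      + {h | H.dist h h₁ + 1 = H.dist h h₂}.ncard
      = m * (closerSet H h₁ h₂).ncard + {h | H.dist h h₁ = H.dist h h₂}.ncard := by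
  have key : closerSet ((⊤ : SimpleGraph (Fin m)) □ H) (g₁, h₁) (g₂, h₂)
        ∪ ({g₂} ×ˢ {h | H.dist h h₁ + 1 = H.dist h h₂})
      = (Set.univ ×ˢ closerSet H h₁ h₂) ∪ ({g₁} ×ˢ {h | H.dist h h₁ = H.dist h h₂}) := by
    ext ⟨g, h⟩
    simp only [closerSet, Set.mem_union, Set.mem_setOf_eq, Set.mem_prod, Set.mem_singleton_iff,
      Set.mem_univ, true_and, boxProd_dist' hm H hH, dist_top']
    rcases eq_or_ne g g₁ with e1 | e1 <;> rcases eq_or_ne g g₂ with e2 | e2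
    · exact absurd (e1.symm.trans e2) hg
    · subst e1; simp [hg, e2]; omega
    · subst e2; simp [Ne.symm hg, e1]; omega
    · simp [e1, e2]
  have d1 : Disjoint (closerSet ((⊤ : SimpleGraph (Fin m)) □ H) (g₁, h₁) (g₂, h₂))
      ({g₂} ×ˢ {h | H.dist h h₁ + 1 = H.dist h h₂}) := by
    rw [Set.disjoint_left]
    rintro ⟨g, h⟩ hx hy
    simp only [closerSet, Set.mem_setOf_eq, boxProd_dist' hm H hH, dist_top'] at hx
    simp only [Set.mem_prod, Set.mem_singleton_iff, Set.mem_setOf_eq] at hy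
    obtain ⟨rfl, hA⟩ := hy
    rw [if_neg (Ne.symm hg), if_pos rfl] at hx
    omega
  have d2 : Disjoint ((Set.univ : Set (Fin m)) ×ˢ closerSet H h₁ h₂)
      ({g₁} ×ˢ {h | H.dist h h₁ = H.dist h h₂}) := by
    rw [Set.disjoint_left]
    rintro ⟨g, h⟩ hx hy
    simp only [closerSet, Set.mem_prod, Set.mem_univ, true_and, Set.mem_setOf_eq,
      Set.mem_singleton_iff] at hx hy
    omega
  have main : (closerSet ((⊤ : SimpleGraph (Fin m)) □ H) (g₁, h₁) (g₂, h₂)).ncard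
      + ({g₂} ×ˢ {h | H.dist h h₁ + 1 = H.dist h h₂}).ncard
      = ((Set.univ : Set (Fin m)) ×ˢ closerSet H h₁ h₂).ncard
        + ({g₁} ×ˢ {h | H.dist h h₁ = H.dist h h₂}).ncard := by
    rw [← Set.ncard_union_eq d1 (Set.toFinite _) (Set.toFinite _), key,
      Set.ncard_union_eq d2 (Set.toFinite _) (Set.toFinite _)]
  have himg : ∀ (g : Fin m) (S : Set β), (Prod.mk g '' S).ncard = S.ncard := fun g S =>
    Set.ncard_image_of_injective _ (fun a b h => by simpa using h)
  simpa [ncard_prod', Set.ncard_singleton, Set.ncard_univ, Nat.card_eq_fintype_card,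
    Fintype.card_fin, himg] using main

theorem stmt10 {β : Type*} [Fintype β] (H : SimpleGraph β) (hH : H.Connected)
    (n ℓ : ℕ) (hn : 2 ≤ n) (hℓ : 2 ≤ ℓ) (hdiam : ℓ ≤ H.diam)
    (hdb : IsDistBalanced H ℓ) (hdb' : IsDistBalanced H (ℓ - 1)) :
    IsDistBalanced ((⊤ : SimpleGraph (Fin n)) □ H) ℓ ↔
      ∀ h₁ h₂ : β, H.dist h₁ h₂ = ℓ - 1 →
        ({h ∈ closerSet H h₁ h₂ | H.dist h₁ h = H.dist h₂ h - 1}).ncard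
          = ({h ∈ closerSet H h₂ h₁ | H.dist h₂ h = H.dist h₁ h - 1}).ncard := by
  have hm : 0 < n := by omega
  constructor
  · intro hbal h₁ h₂ hd
    have hg : (⟨0, hm⟩ : Fin n) ≠ ⟨1, by omega⟩ := by simp [Fin.ext_iff]
    have hdist : ((⊤ : SimpleGraph (Fin n)) □ H).dist ((⟨0, hm⟩ : Fin n), h₁)
        ((⟨1, by omega⟩ : Fin n), h₂) = ℓ := by
      rw [boxProd_dist' hm H hH, dist_top', if_neg hg, hd]; omega
    have e := hbal _ _ hdist
    have c1 := count_key H hH hm hg h₁ h₂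
    have c2 := count_key H hH hm (Ne.symm hg) h₂ h₁
    have hd' : H.dist h₂ h₁ = ℓ - 1 := by
      rw [show H.dist h₂ h₁ = H.dist h₁ h₂ from SimpleGraph.dist_comm]; exact hd
    have hAB := hdb' h₁ h₂ hd
    have hE : ({h | H.dist h h₂ = H.dist h h₁} : Set β).ncard
        = ({h | H.dist h h₁ = H.dist h h₂} : Set β).ncard := by
      congr 1; ext h; exact eq_comm
    rw [sep_eq', sep_eq']
    rw [← hAB] at c2
    generalize n * (closerSet H h₁ h₂).ncard = t at c1 c2
    omega
  · intro cond u v hdist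
    obtain ⟨g₁, h₁⟩ := u
    obtain ⟨g₂, h₂⟩ := v
    rw [boxProd_dist' hm H hH, dist_top'] at hdist
    by_cases hg : g₁ = g₂
    · rw [if_pos hg] at hdist
      subst hg
      have hd : H.dist h₁ h₂ = ℓ := by omega
      have hprod : ∀ a b : β, closerSet ((⊤ : SimpleGraph (Fin n)) □ H) (g₁, a) (g₁, b)
          = Set.univ ×ˢ closerSet H a b := by
        intro a b
        ext ⟨g, h⟩
        simp only [closerSet, Set.mem_setOf_eq, Set.mem_prod, Set.mem_univ, true_and,
          boxProd_dist' hm H hH, dist_top']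
        by_cases e : g = g₁ <;> simp [e]
      rw [hprod h₁ h₂, hprod h₂ h₁, ncard_prod', ncard_prod', hdb h₁ h₂ hd]
    · rw [if_neg hg] at hdist
      have hd : H.dist h₁ h₂ = ℓ - 1 := by omega
      have hd' : H.dist h₂ h₁ = ℓ - 1 := by
        rw [show H.dist h₂ h₁ = H.dist h₁ h₂ from SimpleGraph.dist_comm]; exact hd
      have c1 := count_key H hH hm hg h₁ h₂
      have c2 := count_key H hH hm (Ne.symm hg) h₂ h₁
      have hAB := hdb' h₁ h₂ hd
      have ha := cond h₁ h₂ hd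
      rw [sep_eq', sep_eq'] at ha
      have hE : ({h | H.dist h h₂ = H.dist h h₁} : Set β).ncard
          = ({h | H.dist h h₁ = H.dist h h₂} : Set β).ncard := by
        congr 1; ext h; exact eq_comm
      rw [← hAB] at c2
      generalize n * (closerSet H h₁ h₂).ncard = t at c1 c2
      omega
end

section
/- Let G be a finite connected graph of diameter 2. Then G is 2-distance-balanced if and only if deg(a) = deg(b) for every pair of vertices a, b with d(a,b) = 2. -/
open SimpleGraph

theorem stmt14 {V : Type*} [Fintype V] (G : SimpleGraph V) (hG : G.Connected)
    (hd : G.diam = 2) :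
    IsDistBalanced G 2 ↔
      ∀ a b : V, G.dist a b = 2 →
        (G.neighborSet a).ncard = (G.neighborSet b).ncard := by
  have hetop : G.ediam ≠ ⊤ := by
    intro h
    rw [SimpleGraph.diam, h] at hd
    simp at hd
  have hle : ∀ x y : V, G.dist x y ≤ 2 := fun x y => hd ▸ G.dist_le_diam hetop
  have hdist2 : ∀ x y : V, x ≠ y → ¬ G.Adj x y → G.dist x y = 2 := by
    intro x y hne hadj
    have h1 : G.dist x y ≠ 1 := fun h => hadj (dist_eq_one_iff_adj.mp h)
    have h0 : G.dist x y ≠ 0 := by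
      exact fun h0 => hne (hG.dist_eq_zero_iff.mp h0)
    have := hle x y
    omega
  have key : ∀ u v : V, G.dist u v = 2 →
      closerSet G u v = insert u (G.neighborSet u \ G.neighborSet v) := by
    intro u v huv
    have hne : u ≠ v := by rintro rfl; simp [SimpleGraph.dist_self] at huv
    have hnadj : ¬ G.Adj u v := fun h => by
      rw [dist_eq_one_iff_adj.mpr h] at huv; omega
    ext x
    simp only [closerSet, Set.mem_setOf_eq, Set.mem_insert_iff, Set.mem_diff,
      SimpleGraph.mem_neighborSet]
    constructor
    · intro h
      by_cases hxu : x = u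
      · exact Or.inl hxu
      right
      by_cases hau : G.Adj u x
      · refine ⟨hau, fun hav => ?_⟩
        rw [dist_eq_one_iff_adj.mpr hau.symm, dist_eq_one_iff_adj.mpr hav.symm] at h
        omega
      · exfalso
        have : G.dist x u = 2 := hdist2 x u hxu (fun h => hau h.symm)
        have := hle x v
        omega
    · rintro (rfl | ⟨hau, hav⟩)
      · rw [SimpleGraph.dist_self]
        have : G.dist x v ≠ 0 := fun h0 => hne (hG.dist_eq_zero_iff.mp h0)
        omega
      · have hxv : x ≠ v := by rintro rfl; exact hnadj hau
        rw [dist_eq_one_iff_adj.mpr hau.symm, hdist2 x v hxv (fun h => hav h.symm)]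
        omega
  have card : ∀ u v : V, G.dist u v = 2 →
      (closerSet G u v).ncard + (G.neighborSet u ∩ G.neighborSet v).ncard
        = 1 + (G.neighborSet u).ncard := by
    intro u v huv
    rw [key u v huv]
    have hnotmem : u ∉ G.neighborSet u \ G.neighborSet v := by
      simp [SimpleGraph.mem_neighborSet]
    rw [Set.ncard_insert_of_notMem hnotmem (Set.toFinite _)]
    have hdiff : G.neighborSet u \ G.neighborSet v
        = G.neighborSet u \ (G.neighborSet u ∩ G.neighborSet v) := by
      rw [Set.diff_self_inter]
    rw [hdiff]
    have := Set.ncard_diff_add_ncard_of_subset (s := G.neighborSet u ∩ G.neighborSet v)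
        (t := G.neighborSet u) Set.inter_subset_left (Set.toFinite _)
    omega
  constructor
  · intro hbal a b hab
    have h1 := card a b hab
    have h2 := card b a (by rwa [SimpleGraph.dist_comm] at hab)
    have h3 := hbal a b hab
    rw [Set.inter_comm] at h2
    omega
  · intro hdeg u v huv
    have h1 := card u v huv
    have h2 := card v u (by rwa [SimpleGraph.dist_comm] at huv)
    have h3 := hdeg u v huv
    rw [Set.inter_comm] at h2
    omega
end
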